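/- Let G be a finite group, M a semi-Mackey functor on G, S₀ ⊆ M(G/G) the preimage of a saturated G-invariant submonoid S ⊆ M(G/e) under pt_{G/e}^*. Then for any transitive finite G-set X and any t ∈ S₀, (pt_X)_*(pt_X^*(t)) ∈ S₀. In particular, pulling back to G/e via the pullback of pt_X along pt_{G/e}, one has pt_{G/e}^*((pt_X)_* pt_X^*(t)) = (pt_{G/e}^*(t))^n where n = |X|. -/

import Mathlib

/-- A finite `G`-set: a finite type equipped with a `G`-action. -/
structure FinGSet (G : Type) [Group G] where
  carrier : Type
  [fin : Fintype carrier]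
  [act : MulAction G carrier]

attribute [instance] FinGSet.fin FinGSet.act

/-- A map of `G`-sets is equivariant if it commutes with the action. -/
def IsEquivariant {G : Type} [Group G] {X Y : FinGSet G}
    (f : X.carrier → Y.carrier) : Prop :=
  ∀ (g : G) (x : X.carrier), f (g • x) = g • f x

/-- The disjoint union of two finite `G`-sets. -/
def FinGSet.sum {G : Type} [Group G] (X Y : FinGSet G) : FinGSet G where
  carrier := X.carrier ⊕ Y.carrier

/-- A semi-Mackey functor on `G` with underlying family of commutative monoids `N`:
a contravariant functor `res` (restriction) and a covariant functor `tr`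
(transfer) on finite `G`-sets, additive on disjoint unions and satisfying the
Mackey (base change) condition on all pullback diagrams. -/
structure SemiMackey (G : Type) [Group G] (N : FinGSet G → Type)
    [∀ X, CommMonoid (N X)] where
  res : ∀ {X Y : FinGSet G} (f : X.carrier → Y.carrier), IsEquivariant f → (N Y →* N X)
  tr : ∀ {X Y : FinGSet G} (f : X.carrier → Y.carrier), IsEquivariant f → (N X →* N Y)
  res_id : ∀ (X : FinGSet G) (h : IsEquivariant (id : X.carrier → X.carrier)) (m : N X),
    res id h m = m
  tr_id : ∀ (X : FinGSet G) (h : IsEquivariant (id : X.carrier → X.carrier)) (m : N X),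
    tr id h m = m
  res_comp : ∀ {X Y Z : FinGSet G} (f : X.carrier → Y.carrier) (hf : IsEquivariant f)
    (g : Y.carrier → Z.carrier) (hg : IsEquivariant g)
    (hgf : IsEquivariant (g ∘ f)) (m : N Z),
    res (g ∘ f) hgf m = res f hf (res g hg m)
  tr_comp : ∀ {X Y Z : FinGSet G} (f : X.carrier → Y.carrier) (hf : IsEquivariant f)
    (g : Y.carrier → Z.carrier) (hg : IsEquivariant g)
    (hgf : IsEquivariant (g ∘ f)) (m : N X),
    tr (g ∘ f) hgf m = tr g hg (tr f hf m)
  additive : ∀ (X Y : FinGSet G)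
    (h₁ : IsEquivariant (X := X) (Y := FinGSet.sum X Y) Sum.inl)
    (h₂ : IsEquivariant (X := Y) (Y := FinGSet.sum X Y) Sum.inr),
    Function.Bijective (fun m : N (FinGSet.sum X Y) => (res Sum.inl h₁ m, res Sum.inr h₂ m))
  mackey : ∀ {P X W Y : FinGSet G}
    (f : X.carrier → Y.carrier) (hf : IsEquivariant f)
    (g : W.carrier → Y.carrier) (hg : IsEquivariant g)
    (pX : P.carrier → X.carrier) (hpX : IsEquivariant pX)
    (pW : P.carrier → W.carrier) (hpW : IsEquivariant pW)
    (hcomm : ∀ p, f (pX p) = g (pW p)),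
    Function.Bijective
      (fun p : P.carrier =>
        (⟨(pX p, pW p), hcomm p⟩ : {q : X.carrier × W.carrier // f q.1 = g q.2})) →
    ∀ m : N W, res f hf (tr g hg m) = tr pX hpX (res pW hpW m)

/-- The saturation of a subset of a commutative monoid. -/
def satSet {M : Type*} [CommMonoid M] (S : Set M) : Set M :=
  {x | ∃ a : M, ∃ s ∈ S, a * x = s}

/-- The one-point `G`-set `G/G`. -/
def ptObj (G : Type) [Group G] : FinGSet G where
  carrier := PUnit
  act :=
    { smul := fun _ _ => PUnit.unit
      one_smul := fun _ => rfl
      mul_smul := fun _ _ _ => rfl }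

/-- The constant map `pt_X : X → G/G`. -/
def ptMap {G : Type} [Group G] (X : FinGSet G) : X.carrier → (ptObj G).carrier :=
  fun _ => PUnit.unit

theorem ptMap_equivariant {G : Type} [Group G] (X : FinGSet G) :
    IsEquivariant (ptMap X) := fun _ _ => rfl

/-- The free orbit `G/e`, i.e. `G` with the left translation action. -/
abbrev GeObj (G : Type) [Group G] [Fintype G] : FinGSet G where
  carrier := G

theorem rmul_equivariant {G : Type} [Group G] [Fintype G] (g : G) :
    IsEquivariant (X := GeObj G) (Y := GeObj G) (fun x => x * g) :=
  fun a x => by simp [GeObj, smul_eq_mul, mul_assoc]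

section Helpers

variable {G : Type} [Group G] {N : FinGSet G → Type} [∀ X, CommMonoid (N X)]

theorem isEq_comp {X Y Z : FinGSet G} {f : X.carrier → Y.carrier}
    {g : Y.carrier → Z.carrier} (hf : IsEquivariant f) (hg : IsEquivariant g) :
    IsEquivariant (g ∘ f) := fun a x => by
  show g (f (a • x)) = a • g (f x)
  rw [hf a x]; exact hg a (f x)

theorem isEq_id (X : FinGSet G) : IsEquivariant (id : X.carrier → X.carrier) :=
  fun _ _ => rfl

theorem res_congr (M : SemiMackey G N) {X Y : FinGSet G}
    {f f' : X.carrier → Y.carrier} (hf : IsEquivariant f) (hf' : IsEquivariant f')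
    (h : f = f') (m : N Y) : M.res f hf m = M.res f' hf' m := by
  subst h; rfl

theorem tr_congr (M : SemiMackey G N) {X Y : FinGSet G}
    {f f' : X.carrier → Y.carrier} (hf : IsEquivariant f) (hf' : IsEquivariant f')
    (h : f = f') (m : N X) : M.tr f hf m = M.tr f' hf' m := by
  subst h; rfl

theorem inl_equivariant (X Y : FinGSet G) :
    IsEquivariant (X := X) (Y := FinGSet.sum X Y) Sum.inl := fun g x => rfl

theorem inr_equivariant (X Y : FinGSet G) :
    IsEquivariant (X := Y) (Y := FinGSet.sum X Y) Sum.inr := fun g x => rfl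

/-- The empty `G`-set. -/
def emptyG (G : Type) [Group G] : FinGSet G where
  carrier := PEmpty
  act :=
    { smul := fun _ x => PEmpty.elim x
      one_smul := fun x => PEmpty.elim x
      mul_smul := fun _ _ x => PEmpty.elim x }

/-- `N` of an empty `G`-set is trivial. -/
theorem N_subsingleton (M : SemiMackey G N) (E : FinGSet G)
    (hE : IsEmpty E.carrier) (m m' : N E) : m = m' := by
  have h₁ := inl_equivariant E E
  have h₂ := inr_equivariant E E
  have hfe : (Sum.inl : E.carrier → E.carrier ⊕ E.carrier) = Sum.inr :=
    funext fun x => (hE.false x).elim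
  obtain ⟨w, hw⟩ := (M.additive E E h₁ h₂).surjective (m, m')
  have e1 : M.res Sum.inl h₁ w = m := congrArg Prod.fst hw
  have e2 : M.res Sum.inr h₂ w = m' := congrArg Prod.snd hw
  rw [← e1, ← e2, res_congr M h₁ h₂ hfe]

/-- For an injective equivariant map, `res f ∘ tr f = id` (free double coset). -/
theorem res_tr_self (M : SemiMackey G N) {X Y : FinGSet G}
    (f : X.carrier → Y.carrier) (hf : IsEquivariant f)
    (hinj : Function.Injective f) (m : N X) :
    M.res f hf (M.tr f hf m) = m := by
  have hbij : Function.Bijective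
      (fun p : X.carrier =>
        (⟨((id : X.carrier → X.carrier) p, (id : X.carrier → X.carrier) p), rfl⟩ :
          {q : X.carrier × X.carrier // f q.1 = f q.2})) := by
    constructor
    · intro a b h
      exact congrArg (fun q => q.val.1) h
    · rintro ⟨⟨a, b⟩, hab⟩
      exact ⟨a, Subtype.ext (Prod.ext rfl (hinj hab))⟩
  have := M.mackey f hf f hf id (isEq_id X) id (isEq_id X) (fun _ => rfl) hbij m
  rw [this, M.res_id, M.tr_id]

theorem res_inl_tr_inr (M : SemiMackey G N) (X Y : FinGSet G) (m : N Y) :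
    M.res Sum.inl (inl_equivariant X Y) (M.tr (X := Y) (Y := FinGSet.sum X Y) Sum.inr (inr_equivariant X Y) m) = 1 := by
  have he : IsEquivariant (X := emptyG G) (Y := X) (fun p : (emptyG G).carrier => PEmpty.elim p) := fun g x => PEmpty.elim x
  have he' : IsEquivariant (X := emptyG G) (Y := Y) (fun p : (emptyG G).carrier => PEmpty.elim p) := fun g x => PEmpty.elim x
  have hbij : Function.Bijective
      (fun p : (emptyG G).carrier =>
        (⟨((fun p : (emptyG G).carrier => PEmpty.elim p) p,
            (fun p : (emptyG G).carrier => PEmpty.elim p) p), PEmpty.elim p⟩ :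
          {q : X.carrier × Y.carrier // Sum.inl q.1 = Sum.inr q.2})) := by
    constructor
    · intro a; exact PEmpty.elim a
    · rintro ⟨⟨a, b⟩, hab⟩; exact absurd hab (by simp)
  have := M.mackey (P := emptyG G) (X := X) (W := Y) (Y := FinGSet.sum X Y) Sum.inl (inl_equivariant X Y) Sum.inr (inr_equivariant X Y)
    (fun p : (emptyG G).carrier => PEmpty.elim p) he (fun p : (emptyG G).carrier => PEmpty.elim p) he' (fun p => PEmpty.elim p) hbij m
  rw [this]
  have h1 : M.res (fun p : (emptyG G).carrier => PEmpty.elim p) he' m = 1 :=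
    N_subsingleton M (emptyG G) ⟨fun x => PEmpty.elim x⟩ _ _
  rw [h1, map_one]

theorem res_inr_tr_inl (M : SemiMackey G N) (X Y : FinGSet G) (m : N X) :
    M.res Sum.inr (inr_equivariant X Y) (M.tr (X := X) (Y := FinGSet.sum X Y) Sum.inl (inl_equivariant X Y) m) = 1 := by
  have he : IsEquivariant (X := emptyG G) (Y := Y) (fun p : (emptyG G).carrier => PEmpty.elim p) := fun g x => PEmpty.elim x
  have he' : IsEquivariant (X := emptyG G) (Y := X) (fun p : (emptyG G).carrier => PEmpty.elim p) := fun g x => PEmpty.elim x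
  have hbij : Function.Bijective
      (fun p : (emptyG G).carrier =>
        (⟨((fun p : (emptyG G).carrier => PEmpty.elim p) p,
            (fun p : (emptyG G).carrier => PEmpty.elim p) p), PEmpty.elim p⟩ :
          {q : Y.carrier × X.carrier // Sum.inr q.1 = Sum.inl q.2})) := by
    constructor
    · intro a; exact PEmpty.elim a
    · rintro ⟨⟨a, b⟩, hab⟩; exact absurd hab (by simp)
  have := M.mackey (P := emptyG G) (X := Y) (W := X) (Y := FinGSet.sum X Y) Sum.inr (inr_equivariant X Y) Sum.inl (inl_equivariant X Y)
    (fun p : (emptyG G).carrier => PEmpty.elim p) he (fun p : (emptyG G).carrier => PEmpty.elim p) he' (fun p => PEmpty.elim p) hbij m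
  rw [this]
  have h1 : M.res (fun p : (emptyG G).carrier => PEmpty.elim p) he' m = 1 :=
    N_subsingleton M (emptyG G) ⟨fun x => PEmpty.elim x⟩ _ _
  rw [h1, map_one]

/-- Transfer along an isomorphism inverts restriction along it. -/
theorem tr_res_iso (M : SemiMackey G N) {P Z : FinGSet G}
    (e : P.carrier → Z.carrier) (he : IsEquivariant e)
    (e' : Z.carrier → P.carrier) (he' : IsEquivariant e')
    (h1 : ∀ p, e' (e p) = p) (h2 : ∀ z, e (e' z) = z) (y : N Z) :
    M.tr e he (M.res e he y) = y := by
  have hinj : Function.Injective e := Function.LeftInverse.injective h1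
  have hco : IsEquivariant (e ∘ e') := isEq_comp he' he
  have h4 : M.tr e he (M.tr e' he' y) = y := by
    rw [← M.tr_comp e' he' e he hco, tr_congr M hco (isEq_id Z) (funext h2), M.tr_id]
  have h3 : M.res e he y = M.tr e' he' y := by
    conv_lhs => rw [← h4]
    exact res_tr_self M e he hinj _
  rw [h3, h4]

/-- Transport `tr q (res pt t)` along an isomorphism over `G/e`. -/
theorem transport (M : SemiMackey G N) [Fintype G] {P Z : FinGSet G}
    (e : P.carrier → Z.carrier) (he : IsEquivariant e)
    (e' : Z.carrier → P.carrier) (he' : IsEquivariant e')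
    (h1 : ∀ p, e' (e p) = p) (h2 : ∀ z, e (e' z) = z)
    (qP : P.carrier → G) (hqP : IsEquivariant (X := P) (Y := GeObj G) qP)
    (qZ : Z.carrier → G) (hqZ : IsEquivariant (X := Z) (Y := GeObj G) qZ)
    (hcomp : ∀ p, qZ (e p) = qP p) (t : N (ptObj G)) :
    M.tr qP hqP (M.res (ptMap P) (ptMap_equivariant P) t)
      = M.tr (Y := GeObj G) qZ hqZ (M.res (ptMap Z) (ptMap_equivariant Z) t) := by
  have hce : IsEquivariant (X := P) (Y := GeObj G) (qZ ∘ e) := isEq_comp he hqZ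
  have hres : M.res (ptMap P) (ptMap_equivariant P) t
      = M.res e he (M.res (ptMap Z) (ptMap_equivariant Z) t) := by
    rw [← M.res_comp e he (ptMap Z) (ptMap_equivariant Z) (ptMap_equivariant P)]
    exact res_congr M (ptMap_equivariant P) (ptMap_equivariant P) rfl t
  rw [hres, tr_congr M hqP hce (funext fun p => (hcomp p).symm),
    M.tr_comp (Z := GeObj G) e he qZ hqZ hce, tr_res_iso M e he e' he' h1 h2]

/-- Additivity of transfer over a disjoint union. -/
theorem tr_fold (M : SemiMackey G N) {X Y C : FinGSet G}
    (h : (FinGSet.sum X Y).carrier → C.carrier) (hh : IsEquivariant h)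
    (f : X.carrier → C.carrier) (hf : IsEquivariant f)
    (g : Y.carrier → C.carrier) (hg : IsEquivariant g)
    (hfl : ∀ x, h (Sum.inl x) = f x) (hgr : ∀ y, h (Sum.inr y) = g y)
    (m : N (FinGSet.sum X Y)) :
    M.tr h hh m
      = M.tr f hf (M.res Sum.inl (inl_equivariant X Y) m)
        * M.tr g hg (M.res Sum.inr (inr_equivariant X Y) m) := by
  set h₁ := inl_equivariant X Y
  set h₂ := inr_equivariant X Y
  set m₁ := M.res Sum.inl h₁ m with hm₁
  set m₂ := M.res Sum.inr h₂ m with hm₂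
  have hm : m = M.tr Sum.inl h₁ m₁ * M.tr Sum.inr h₂ m₂ := by
    apply (M.additive X Y h₁ h₂).injective
    have i1 : Function.Injective (Sum.inl : X.carrier → X.carrier ⊕ Y.carrier) :=
      Sum.inl_injective
    have i2 : Function.Injective (Sum.inr : Y.carrier → X.carrier ⊕ Y.carrier) :=
      Sum.inr_injective
    simp only [map_mul, res_tr_self M (X := X) (Y := FinGSet.sum X Y) Sum.inl h₁ i1, res_tr_self M (X := Y) (Y := FinGSet.sum X Y) Sum.inr h₂ i2,
      res_inl_tr_inr M X Y, res_inr_tr_inl M X Y, mul_one, one_mul]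
    rfl
  have hcl : IsEquivariant (h ∘ Sum.inl) := isEq_comp h₁ hh
  have hcr : IsEquivariant (h ∘ Sum.inr) := isEq_comp h₂ hh
  rw [hm, map_mul, ← M.tr_comp Sum.inl h₁ h hh hcl, ← M.tr_comp Sum.inr h₂ h hh hcr,
    tr_congr M hcl hf (funext hfl), tr_congr M hcr hg (funext hgr)]

variable [Fintype G]

/-- The `G`-set `G × F` with trivial action on `F`. -/
def GF (G : Type) [Group G] [Fintype G] (F : Type) [Fintype F] : FinGSet G where
  carrier := G × F
  act :=
    { smul := fun g p => (g * p.1, p.2)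
      one_smul := fun p => by show (1 * p.1, p.2) = p; rw [one_mul]
      mul_smul := fun a b p => by
        show (a * b * p.1, p.2) = (a * (b * p.1), p.2); rw [mul_assoc] }

theorem GF_smul {F : Type} [Fintype F] (g : G) (p : (GF G F).carrier) :
    g • p = (g * p.1, p.2) := rfl

theorem GF_pr1_equivariant (F : Type) [Fintype F] :
    IsEquivariant (X := GF G F) (Y := GeObj G) (fun p => p.1) := fun g p => rfl

/-- The `G`-set `G × X` with diagonal action. -/
def diagP (G : Type) [Group G] [Fintype G] (X : FinGSet G) : FinGSet G where
  carrier := G × X.carrier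
  act :=
    { smul := fun g p => (g * p.1, g • p.2)
      one_smul := fun p => by show (1 * p.1, (1 : G) • p.2) = p; rw [one_mul, one_smul]
      mul_smul := fun a b p => by
        show (a * b * p.1, (a * b) • p.2) = (a * (b * p.1), a • b • p.2)
        rw [mul_assoc, mul_smul] }

theorem diagP_smul {X : FinGSet G} (g : G) (p : (diagP G X).carrier) :
    g • p = (g * p.1, g • p.2) := rfl

/-- The key computation: the transfer of the restriction of `t` over `G × Fin n → G`
is the `n`-th power of the restriction of `t`. -/
theorem tr_GF_fin (M : SemiMackey G N) (t : N (ptObj G)) : ∀ n : ℕ,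
    M.tr (fun p : (GF G (Fin n)).carrier => p.1) (GF_pr1_equivariant (Fin n))
        (M.res (ptMap (GF G (Fin n))) (ptMap_equivariant (GF G (Fin n))) t)
      = (M.res (ptMap (GeObj G)) (ptMap_equivariant (GeObj G)) t) ^ n := by
  intro n
  induction n with
  | zero =>
    have hE : IsEmpty ((GF G (Fin 0)).carrier) := by
      show IsEmpty (G × Fin 0); infer_instance
    have h1 : M.res (ptMap (GF G (Fin 0))) (ptMap_equivariant _) t = 1 :=
      N_subsingleton M _ hE _ _
    rw [h1, map_one, pow_zero]
  | succ n ih =>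
    set Zs := FinGSet.sum (GF G (Fin n)) (GeObj G) with hZs
    let e : (GF G (Fin (n + 1))).carrier → Zs.carrier := fun p =>
      if h : (p.2 : ℕ) < n then Sum.inl (p.1, ⟨p.2, h⟩) else Sum.inr p.1
    let e' : Zs.carrier → (GF G (Fin (n + 1))).carrier :=
      Sum.elim (fun q => (q.1, Fin.castSucc q.2)) (fun a => (a, Fin.last n))
    have he : IsEquivariant e := by
      intro g p
      show e (g * p.1, p.2) = g • e p
      by_cases h : (p.2 : ℕ) < n
      · simp only [e, h, ↓reduceDIte]
        rfl
      · simp only [e, h, ↓reduceDIte]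
        rfl
    have he' : IsEquivariant e' := by
      intro g q
      cases q with
      | inl p => rfl
      | inr a => rfl
    have h1 : ∀ p, e' (e p) = p := by
      intro p
      by_cases h : (p.2 : ℕ) < n
      · simp only [e, e', h, ↓reduceDIte, Sum.elim_inl]
        exact Prod.ext rfl (Fin.ext rfl)
      · simp only [e, e', h, ↓reduceDIte, Sum.elim_inr]
        refine Prod.ext rfl (Fin.ext ?_)
        have := p.2.isLt
        show n = (p.2 : ℕ)
        omega
    have h2 : ∀ z, e (e' z) = z := by
      intro z
      cases z with
      | inl q =>
        have h : ((Fin.castSucc q.2 : Fin (n+1)) : ℕ) < n := q.2.isLt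
        simp only [e, e', Sum.elim_inl, dif_pos h]
        exact (dif_pos h).trans (congrArg Sum.inl (Prod.ext rfl (Fin.ext rfl)))
      | inr a =>
        have h : ¬ ((Fin.last n : Fin (n+1)) : ℕ) < n := by simp
        simp only [e, e', Sum.elim_inr, dif_neg h]
        exact dif_neg h
    have hqZ : IsEquivariant (X := Zs) (Y := GeObj G)
        (Sum.elim (fun p => p.1) (fun a => a)) := by
      intro g q
      cases q with
      | inl p => rfl
      | inr a => rfl
    have hcomp : ∀ p, Sum.elim (fun p : (GF G (Fin n)).carrier => p.1)
        (fun a : G => a) (e p) = p.1 := by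
      intro p
      by_cases h : (p.2 : ℕ) < n
      · simp only [e, h, ↓reduceDIte, Sum.elim_inl]
        rfl
      · simp only [e, h, ↓reduceDIte, Sum.elim_inr]
    rw [transport M e he e' he' h1 h2 (fun p : (GF G (Fin (n+1))).carrier => p.1)
      (GF_pr1_equivariant (Fin (n+1)))
      (Sum.elim (fun p : (GF G (Fin n)).carrier => p.1) (fun a => a)) hqZ hcomp t]
    rw [tr_fold M (X := GF G (Fin n)) (Y := GeObj G) (C := GeObj G) (Sum.elim (fun p : (GF G (Fin n)).carrier => p.1) (fun a => a)) hqZ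
      (fun p : (GF G (Fin n)).carrier => p.1) (GF_pr1_equivariant (Fin n))
      (fun a => a) (fun g a => rfl) (fun x => rfl) (fun y => rfl)
      (M.res (ptMap Zs) (ptMap_equivariant Zs) t)]
    have e1 : M.res Sum.inl (inl_equivariant (GF G (Fin n)) (GeObj G))
        (M.res (ptMap Zs) (ptMap_equivariant Zs) t)
        = M.res (ptMap (GF G (Fin n))) (ptMap_equivariant _) t :=
      (M.res_comp Sum.inl (inl_equivariant _ _) (ptMap Zs) (ptMap_equivariant Zs)
        (ptMap_equivariant (GF G (Fin n))) t).symm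
    have e2 : M.res Sum.inr (inr_equivariant (GF G (Fin n)) (GeObj G))
        (M.res (ptMap Zs) (ptMap_equivariant Zs) t)
        = M.res (ptMap (GeObj G)) (ptMap_equivariant (GeObj G)) t :=
      (M.res_comp Sum.inr (inr_equivariant _ _) (ptMap Zs) (ptMap_equivariant Zs)
        (ptMap_equivariant (GeObj G)) t).symm
    rw [e1, e2, ih]
    have e3 : M.tr (fun a : G => a) (fun g a => rfl)
        (M.res (ptMap (GeObj G)) (ptMap_equivariant (GeObj G)) t)
        = M.res (ptMap (GeObj G)) (ptMap_equivariant (GeObj G)) t :=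
      M.tr_id (GeObj G) (fun g a => rfl) _
    rw [e3, pow_succ]

end Helpers

/-- For a saturated `G`-invariant submonoid `S ⊆ M(G/e)` with
`S₀ = (pt_{G/e}^*)⁻¹(S)`, for every transitive finite `G`-set `X` and every
`t ∈ S₀` one has `(pt_X)_*(pt_X^*(t)) ∈ S₀`; in fact
`pt_{G/e}^*((pt_X)_* pt_X^*(t)) = (pt_{G/e}^*(t))^n` where `n = |X|`. -/
theorem tr_res_ptMap_mem {G : Type} [Group G] [Fintype G] {N : FinGSet G → Type}
    [∀ X, CommMonoid (N X)] (M : SemiMackey G N)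
    (S : Submonoid (N (GeObj G)))
    (hsat : satSet (S : Set (N (GeObj G))) = (S : Set (N (GeObj G))))
    (hinv : ∀ g : G, ∀ s ∈ S, M.res (fun x => x * g) (rmul_equivariant g) s ∈ S)
    (X : FinGSet G) (hX : MulAction.IsPretransitive G X.carrier)
    (t : N (ptObj G))
    (ht : M.res (ptMap (GeObj G)) (ptMap_equivariant (GeObj G)) t ∈ S) :
    M.res (ptMap (GeObj G)) (ptMap_equivariant (GeObj G))
        (M.tr (ptMap X) (ptMap_equivariant X)
          (M.res (ptMap X) (ptMap_equivariant X) t)) ∈ S ∧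
    M.res (ptMap (GeObj G)) (ptMap_equivariant (GeObj G))
        (M.tr (ptMap X) (ptMap_equivariant X)
          (M.res (ptMap X) (ptMap_equivariant X) t))
      = (M.res (ptMap (GeObj G)) (ptMap_equivariant (GeObj G)) t)
          ^ (Fintype.card X.carrier) := by
  classical
  have pr1eq : IsEquivariant (X := diagP G X) (Y := GeObj G)
      (fun p => p.1) := fun g p => rfl
  have pr2eq : IsEquivariant (X := diagP G X) (Y := X)
      (fun p => p.2) := fun g p => rfl
  have bij : Function.Bijective
      (fun p : (diagP G X).carrier =>
        (⟨((fun p : (diagP G X).carrier => p.1) p,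
            (fun p : (diagP G X).carrier => p.2) p), rfl⟩ :
          {q : G × X.carrier // ptMap (GeObj G) q.1 = ptMap X q.2})) := by
    constructor
    · intro a b h
      exact congrArg Subtype.val h
    · intro q
      exact ⟨q.1, Subtype.ext rfl⟩
  have step1 := M.mackey (ptMap (GeObj G)) (ptMap_equivariant (GeObj G))
    (ptMap X) (ptMap_equivariant X)
    (fun p : (diagP G X).carrier => p.1) pr1eq
    (fun p : (diagP G X).carrier => p.2) pr2eq
    (fun p => rfl) bij (M.res (ptMap X) (ptMap_equivariant X) t)
  have step2 : M.res (fun p : (diagP G X).carrier => p.2) pr2eq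
      (M.res (ptMap X) (ptMap_equivariant X) t)
      = M.res (ptMap (diagP G X)) (ptMap_equivariant (diagP G X)) t :=
    (M.res_comp (fun p : (diagP G X).carrier => p.2) pr2eq
      (ptMap X) (ptMap_equivariant X) (ptMap_equivariant (diagP G X)) t).symm
  set n := Fintype.card X.carrier with hn
  let φ : X.carrier ≃ Fin n := Fintype.equivFin X.carrier
  -- iso diagP G X → GF G X.carrier
  let e1 : (diagP G X).carrier → (GF G X.carrier).carrier :=
    fun p => (p.1, p.1⁻¹ • p.2)
  let e1' : (GF G X.carrier).carrier → (diagP G X).carrier :=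
    fun q => (q.1, q.1 • q.2)
  have he1 : IsEquivariant e1 := by
    intro g p
    show ((g * p.1, (g * p.1)⁻¹ • (g • p.2)) : G × X.carrier)
      = (g * p.1, p.1⁻¹ • p.2)
    refine Prod.ext rfl ?_
    rw [smul_smul, mul_inv_rev, inv_mul_cancel_right]
  have he1' : IsEquivariant e1' := by
    intro g q
    show ((g * q.1, (g * q.1) • q.2) : G × X.carrier)
      = (g * q.1, g • (q.1 • q.2))
    refine Prod.ext rfl ?_
    rw [mul_smul]
  have hi1 : ∀ p, e1' (e1 p) = p := by
    intro p
    show ((p.1, p.1 • (p.1⁻¹ • p.2)) : G × X.carrier) = p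
    refine Prod.ext rfl ?_
    rw [smul_inv_smul]
  have hi2 : ∀ q, e1 (e1' q) = q := by
    intro q
    show ((q.1, q.1⁻¹ • (q.1 • q.2)) : G × X.carrier) = q
    refine Prod.ext rfl ?_
    rw [inv_smul_smul]
  have htrans1 := transport M e1 he1 e1' he1' hi1 hi2
    (fun p => p.1) pr1eq (fun p => p.1) (GF_pr1_equivariant X.carrier)
    (fun p => rfl) t
  -- iso GF G X.carrier → GF G (Fin n)
  let e2 : (GF G X.carrier).carrier → (GF G (Fin n)).carrier :=
    fun p => (p.1, φ p.2)
  let e2' : (GF G (Fin n)).carrier → (GF G X.carrier).carrier :=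
    fun q => (q.1, φ.symm q.2)
  have he2 : IsEquivariant e2 := fun g p => rfl
  have he2' : IsEquivariant e2' := fun g q => rfl
  have hj1 : ∀ p, e2' (e2 p) = p := by
    intro p
    show ((p.1, φ.symm (φ p.2)) : G × X.carrier) = p
    rw [Equiv.symm_apply_apply]
    rfl
  have hj2 : ∀ q, e2 (e2' q) = q := by
    intro q
    show ((q.1, φ (φ.symm q.2)) : G × Fin n) = q
    rw [Equiv.apply_symm_apply]
    rfl
  have htrans2 := transport M e2 he2 e2' he2'
    hj1 hj2 (fun p => p.1) (GF_pr1_equivariant X.carrier)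
    (fun p => p.1) (GF_pr1_equivariant (Fin n)) (fun p => rfl) t
  have key : M.res (ptMap (GeObj G)) (ptMap_equivariant (GeObj G))
      (M.tr (ptMap X) (ptMap_equivariant X)
        (M.res (ptMap X) (ptMap_equivariant X) t))
      = (M.res (ptMap (GeObj G)) (ptMap_equivariant (GeObj G)) t) ^ n := by
    rw [step1, step2, htrans1, htrans2, tr_GF_fin M t n]
  exact ⟨key ▸ pow_mem ht n, key⟩
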